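/- Let B be a ring, A a subring of B, and x an element of B. Assume that (i) A is left Noetherian, (ii) Ax + A = xA + A as additive subgroups of B, and (iii) B = Σ_{k≥0} A x^k. Then B is left Noetherian. -/

import Mathlib

namespace LeftNoethAux

variable {B : Type*} [Ring B] (A : Subring B) (x : B)

/-- The additive subgroup `Σ_{i < n} A xⁱ`. -/
def P (n : ℕ) : AddSubgroup B :=
  AddSubgroup.closure {b : B | ∃ (a : A) (i : ℕ), i < n ∧ b = (a : B) * x ^ i}

lemma mem_P_gen {a : A} {i n : ℕ} (h : i < n) : (a : B) * x ^ i ∈ P A x n :=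
  AddSubgroup.subset_closure ⟨a, i, h, rfl⟩

lemma P_mono {m n : ℕ} (h : m ≤ n) : P A x m ≤ P A x n :=
  AddSubgroup.closure_mono (fun b ⟨a, i, hi, hb⟩ => ⟨a, i, lt_of_lt_of_le hi h, hb⟩)

lemma P_zero : P A x 0 = ⊥ := by
  apply le_antisymm _ bot_le
  rw [P, AddSubgroup.closure_le]
  rintro b ⟨a, i, hi, hb⟩
  exact absurd hi (Nat.not_lt_zero i)

/-- Left multiplication by elements of `A` preserves `P n`. -/
lemma smul_P {n : ℕ} (c : A) {p : B} (hp : p ∈ P A x n) : (c : B) * p ∈ P A x n := by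
  induction hp using AddSubgroup.closure_induction with
  | mem b hb =>
    obtain ⟨a, i, hi, rfl⟩ := hb
    have h1 : (c : B) * ((a : B) * x ^ i) = ((c * a : A) : B) * x ^ i := by
      push_cast; rw [mul_assoc]
    rw [h1]
    exact mem_P_gen A x hi
  | zero => simpa using (P A x n).zero_mem
  | add p q _ _ hp hq => rw [mul_add]; exact (P A x n).add_mem hp hq
  | neg p _ hp => rw [mul_neg]; exact (P A x n).neg_mem hp

/-- Left multiplication by `x` raises degree by at most one. -/
lemma x_mul_P (hx1 : ∀ a : A, ∃ c d : A, x * (a : B) = (c : B) * x + (d : B))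
    {n : ℕ} {p : B} (hp : p ∈ P A x n) : x * p ∈ P A x (n + 1) := by
  induction hp using AddSubgroup.closure_induction with
  | mem b hb =>
    obtain ⟨a, i, hi, rfl⟩ := hb
    obtain ⟨c, d, hcd⟩ := hx1 a
    rw [← mul_assoc, hcd, add_mul, mul_assoc, ← pow_succ']
    exact (P A x (n + 1)).add_mem (mem_P_gen A x (by omega)) (mem_P_gen A x (by omega))
  | zero => simpa using (P A x (n + 1)).zero_mem
  | add p q _ _ hp hq => rw [mul_add]; exact (P A x (n + 1)).add_mem hp hq
  | neg p _ hp => rw [mul_neg]; exact (P A x (n + 1)).neg_mem hp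

/-- `xⁱ a ∈ Σ_{j ≤ i} A xʲ`. -/
lemma pow_mul_mem (hx1 : ∀ a : A, ∃ c d : A, x * (a : B) = (c : B) * x + (d : B))
    (i : ℕ) (a : A) : x ^ i * (a : B) ∈ P A x (i + 1) := by
  induction i with
  | zero => simpa using mem_P_gen A x (a := a) (i := 0) (n := 1) Nat.zero_lt_one
  | succ i ih =>
    have := x_mul_P A x hx1 ih
    rwa [← mul_assoc, ← pow_succ'] at this

/-- Right multiplication by elements of `A` preserves `P n`. -/
lemma P_mul_mem (hx1 : ∀ a : A, ∃ c d : A, x * (a : B) = (c : B) * x + (d : B))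
    {n : ℕ} {p : B} (hp : p ∈ P A x n) (a : A) : p * (a : B) ∈ P A x n := by
  induction hp using AddSubgroup.closure_induction with
  | mem b hb =>
    obtain ⟨c, i, hi, rfl⟩ := hb
    rw [mul_assoc]
    exact P_mono A x hi (smul_P A x c (pow_mul_mem A x hx1 i a))
  | zero => simpa using (P A x n).zero_mem
  | add p q _ _ hp hq => rw [add_mul]; exact (P A x n).add_mem hp hq
  | neg p _ hp => rw [neg_mul]; exact (P A x n).neg_mem hp

/-- Key commutation: `xⁿ d ≡ c xⁿ mod P n` for some `c`. -/
lemma exists_comm_right (hx1 : ∀ a : A, ∃ c d : A, x * (a : B) = (c : B) * x + (d : B))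
    (n : ℕ) (d : A) :
    ∃ c : A, x ^ n * (d : B) - (c : B) * x ^ n ∈ P A x n := by
  induction n with
  | zero => exact ⟨d, by simp [(P A x 0).zero_mem]⟩
  | succ n ih =>
    obtain ⟨c, hc⟩ := ih
    obtain ⟨c₁, c₀, hcc⟩ := hx1 c
    refine ⟨c₁, ?_⟩
    have h2 : x ^ (n + 1) * (d : B) - (c₁ : B) * x ^ (n + 1) =
        x * (x ^ n * (d : B) - (c : B) * x ^ n) + ((c₀ : B) * x ^ n) := by
      rw [mul_sub, show x * ((c : B) * x ^ n) = ((c₁ : B) * x + (c₀ : B)) * x ^ n by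
        rw [← mul_assoc, hcc]]
      rw [add_mul, mul_assoc c₁.val x, ← pow_succ', ← mul_assoc, ← pow_succ']
      abel
    rw [h2]
    exact (P A x (n + 1)).add_mem (x_mul_P A x hx1 hc) (mem_P_gen A x (by omega))

/-- Key commutation the other way: `a xⁿ ≡ xⁿ c mod P n` for some `c`. -/
lemma exists_comm_left (hx1 : ∀ a : A, ∃ c d : A, x * (a : B) = (c : B) * x + (d : B))
    (hx2 : ∀ a : A, ∃ c d : A, (a : B) * x = x * (c : B) + (d : B))
    (n : ℕ) (a : A) :
    ∃ c : A, (a : B) * x ^ n - x ^ n * (c : B) ∈ P A x n := by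
  induction n generalizing a with
  | zero => exact ⟨a, by simp [(P A x 0).zero_mem]⟩
  | succ n ih =>
    obtain ⟨c, d, hcd⟩ := hx2 a
    obtain ⟨c', hc'⟩ := ih c
    refine ⟨c', ?_⟩
    have h2 : (a : B) * x ^ (n + 1) - x ^ (n + 1) * (c' : B) =
        x * ((c : B) * x ^ n - x ^ n * (c' : B)) + ((d : B) * x ^ n) := by
      rw [show (a : B) * x ^ (n + 1) = ((a : B) * x) * x ^ n by rw [mul_assoc, ← pow_succ']]
      rw [hcd, add_mul, mul_sub, mul_assoc x c.val, ← mul_assoc x (x ^ n), ← pow_succ']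
      abel
    rw [h2]
    exact (P A x (n + 1)).add_mem (x_mul_P A x hx1 hc') (mem_P_gen A x (by omega))

/-- Every element of `P (n+1)` can be written `xⁿ c + (lower terms)`. -/
lemma exists_leading (hx1 : ∀ a : A, ∃ c d : A, x * (a : B) = (c : B) * x + (d : B))
    (hx2 : ∀ a : A, ∃ c d : A, (a : B) * x = x * (c : B) + (d : B))
    (n : ℕ) {f : B} (hf : f ∈ P A x (n + 1)) :
    ∃ c : A, f - x ^ n * (c : B) ∈ P A x n := by
  induction hf using AddSubgroup.closure_induction with
  | mem b hb =>
    obtain ⟨a, i, hi, rfl⟩ := hb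
    rcases Nat.lt_or_ge i n with h | h
    · exact ⟨0, by simpa using mem_P_gen A x h⟩
    · have h' : i = n := by omega
      rw [h']
      exact exists_comm_left A x hx1 hx2 n a
  | zero => exact ⟨0, by simpa using (P A x n).zero_mem⟩
  | add p q hp hq ihp ihq =>
    obtain ⟨c, hc⟩ := ihp
    obtain ⟨c', hc'⟩ := ihq
    refine ⟨c + c', ?_⟩
    have : p + q - x ^ n * ((c + c' : A) : B) =
        (p - x ^ n * (c : B)) + (q - x ^ n * (c' : B)) := by push_cast; rw [mul_add]; abel
    rw [this]
    exact (P A x n).add_mem hc hc'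
  | neg p hp ihp =>
    obtain ⟨c, hc⟩ := ihp
    refine ⟨-c, ?_⟩
    have : -p - x ^ n * ((-c : A) : B) = -(p - x ^ n * (c : B)) := by
      push_cast; rw [mul_neg]; abel
    rw [this]
    exact (P A x n).neg_mem hc

/-- The left ideal of `A` of degree-`n` leading coefficients of a left ideal `K` of `B`. -/
def idealOf (hx1 : ∀ a : A, ∃ c d : A, x * (a : B) = (c : B) * x + (d : B))
    (K : Ideal B) (n : ℕ) : Ideal A where
  carrier := {a : A | ∃ f, f ∈ K ∧ f - x ^ n * (a : B) ∈ P A x n}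
  zero_mem' := ⟨0, K.zero_mem, by simpa using (P A x n).zero_mem⟩
  add_mem' := by
    rintro a b ⟨f, hfK, hf⟩ ⟨g, hgK, hg⟩
    refine ⟨f + g, K.add_mem hfK hgK, ?_⟩
    have : f + g - x ^ n * ((a + b : A) : B) =
        (f - x ^ n * (a : B)) + (g - x ^ n * (b : B)) := by push_cast; rw [mul_add]; abel
    rw [this]
    exact (P A x n).add_mem hf hg
  smul_mem' := by
    rintro d a ⟨f, hfK, hf⟩
    obtain ⟨c, hc⟩ := exists_comm_right A x hx1 n d
    refine ⟨(c : B) * f, K.smul_mem (c : B) hfK, ?_⟩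
    have hda : ((d • a : A) : B) = (d : B) * (a : B) := rfl
    have key : (c : B) * f - x ^ n * ((d • a : A) : B) =
        (c : B) * (f - x ^ n * (a : B)) - (x ^ n * (d : B) - (c : B) * x ^ n) * (a : B) := by
      rw [hda, mul_sub, sub_mul, mul_assoc, mul_assoc, ← mul_assoc (x ^ n)]
      abel
    rw [key]
    exact (P A x n).sub_mem (smul_P A x c hf) (P_mul_mem A x hx1 hc a)

lemma mem_idealOf {hx1 : ∀ a : A, ∃ c d : A, x * (a : B) = (c : B) * x + (d : B)}
    {K : Ideal B} {n : ℕ} {a : A} :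
    a ∈ idealOf A x hx1 K n ↔ ∃ f, f ∈ K ∧ f - x ^ n * (a : B) ∈ P A x n := Iff.rfl

lemma idealOf_succ {hx1 : ∀ a : A, ∃ c d : A, x * (a : B) = (c : B) * x + (d : B)}
    {K : Ideal B} (n : ℕ) :
    idealOf A x hx1 K n ≤ idealOf A x hx1 K (n + 1) := by
  rintro a ⟨f, hfK, hf⟩
  refine ⟨x * f, K.smul_mem x hfK, ?_⟩
  have : x * f - x ^ (n + 1) * (a : B) = x * (f - x ^ n * (a : B)) := by
    rw [mul_sub, ← mul_assoc, ← pow_succ']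
  rw [this]
  exact x_mul_P A x hx1 hf

lemma idealOf_mono {hx1 : ∀ a : A, ∃ c d : A, x * (a : B) = (c : B) * x + (d : B)}
    {K : Ideal B} {m n : ℕ} (h : m ≤ n) :
    idealOf A x hx1 K m ≤ idealOf A x hx1 K n := by
  induction n with
  | zero => rw [Nat.le_zero] at h; subst h; exact le_rfl
  | succ n ih =>
    rcases Nat.lt_or_ge m (n + 1) with h' | h'
    · exact le_trans (ih (by omega)) (idealOf_succ A x n)
    · have : m = n + 1 := by omega
      subst this; exact le_rfl

end LeftNoethAux

open LeftNoethAux in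
/-- Let `B` be a ring, `A` a subring of `B`, and `x ∈ B`. Assume that
(i) `A` is left Noetherian, (ii) `Ax + A = xA + A` as additive subgroups of `B`, and
(iii) `B = Σ_{k ≥ 0} A x^k`.  Then `B` is left Noetherian. -/
theorem left_noetherian_of_subring_pow
    (B : Type*) [Ring B] (A : Subring B) (x : B)
    (hNoeth : IsNoetherianRing A)
    (hAx : AddSubgroup.closure {b : B | ∃ a a' : A, b = (a : B) * x + (a' : B)} =
           AddSubgroup.closure {b : B | ∃ a a' : A, b = x * (a : B) + (a' : B)})
    (hgen : AddSubgroup.closure {b : B | ∃ (a : A) (k : ℕ), b = (a : B) * x ^ k} = ⊤) :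
    IsNoetherianRing B := by
  classical
  -- Step 1: extract the two commutation rules from `hAx`.
  have hS1 : ∀ b ∈ AddSubgroup.closure {b : B | ∃ a a' : A, b = (a : B) * x + (a' : B)},
      ∃ a a' : A, b = (a : B) * x + (a' : B) := by
    intro b hb
    induction hb using AddSubgroup.closure_induction with
    | mem b hb => exact hb
    | zero => exact ⟨0, 0, by simp⟩
    | add p q _ _ hp hq =>
      obtain ⟨a, a', rfl⟩ := hp
      obtain ⟨c, c', rfl⟩ := hq
      refine ⟨a + c, a' + c', ?_⟩
      push_cast
      rw [add_mul]
      abel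
    | neg p _ hp =>
      obtain ⟨a, a', rfl⟩ := hp
      refine ⟨-a, -a', ?_⟩
      push_cast
      rw [neg_mul]
      abel
  have hS2 : ∀ b ∈ AddSubgroup.closure {b : B | ∃ a a' : A, b = x * (a : B) + (a' : B)},
      ∃ a a' : A, b = x * (a : B) + (a' : B) := by
    intro b hb
    induction hb using AddSubgroup.closure_induction with
    | mem b hb => exact hb
    | zero => exact ⟨0, 0, by simp⟩
    | add p q _ _ hp hq =>
      obtain ⟨a, a', rfl⟩ := hp
      obtain ⟨c, c', rfl⟩ := hq
      refine ⟨a + c, a' + c', ?_⟩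
      push_cast
      rw [mul_add]
      abel
    | neg p _ hp =>
      obtain ⟨a, a', rfl⟩ := hp
      refine ⟨-a, -a', ?_⟩
      push_cast
      rw [mul_neg]
      abel
  have hx1 : ∀ a : A, ∃ c d : A, x * (a : B) = (c : B) * x + (d : B) := by
    intro a
    have : x * (a : B) ∈ AddSubgroup.closure
        {b : B | ∃ a a' : A, b = x * (a : B) + (a' : B)} :=
      AddSubgroup.subset_closure ⟨a, 0, by simp⟩
    rw [← hAx] at this
    obtain ⟨c, d, h⟩ := hS1 _ this
    exact ⟨c, d, h⟩
  have hx2 : ∀ a : A, ∃ c d : A, (a : B) * x = x * (c : B) + (d : B) := by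
    intro a
    have : (a : B) * x ∈ AddSubgroup.closure
        {b : B | ∃ a a' : A, b = (a : B) * x + (a' : B)} :=
      AddSubgroup.subset_closure ⟨a, 0, by simp⟩
    rw [hAx] at this
    obtain ⟨c, d, h⟩ := hS2 _ this
    exact ⟨c, d, h⟩
  -- Step 2: every element of `B` lies in some `P n`.
  have hunion : ∀ b : B, ∃ n, b ∈ P A x n := by
    intro b
    have hb : b ∈ AddSubgroup.closure {b : B | ∃ (a : A) (k : ℕ), b = (a : B) * x ^ k} := by
      rw [hgen]; trivial
    induction hb using AddSubgroup.closure_induction with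
    | mem b hb =>
      obtain ⟨a, k, rfl⟩ := hb
      exact ⟨k + 1, mem_P_gen A x (by omega)⟩
    | zero => exact ⟨0, (P A x 0).zero_mem⟩
    | add p q _ _ hp hq =>
      obtain ⟨m, hm⟩ := hp
      obtain ⟨n, hn⟩ := hq
      exact ⟨max m n, (P A x _).add_mem (P_mono A x (le_max_left m n) hm)
        (P_mono A x (le_max_right m n) hn)⟩
    | neg p _ hp =>
      obtain ⟨m, hm⟩ := hp
      exact ⟨m, (P A x m).neg_mem hm⟩
  -- Step 3: Hilbert basis argument.
  rw [isNoetherianRing_iff_ideal_fg]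
  intro I
  haveI : IsNoetherian A A := hNoeth
  set c : ℕ →o Ideal A :=
    ⟨fun n => idealOf A x hx1 I n, fun m n h => idealOf_mono A x h⟩ with hc
  obtain ⟨N, hN⟩ := monotone_stabilizes_iff_noetherian.mpr ‹IsNoetherian A A› c
  have hfg : ∀ n : ℕ, ∃ S : Finset A, Submodule.span A (S : Set A) = idealOf A x hx1 I n :=
    fun n => IsNoetherian.noetherian _
  choose S hS using hfg
  have hwit : ∀ (n : ℕ) (a : A), a ∈ idealOf A x hx1 I n →
      ∃ f, f ∈ I ∧ f - x ^ n * (a : B) ∈ P A x n := fun n a h => h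
  let w : ℕ → A → B := fun n a =>
    if h : a ∈ idealOf A x hx1 I n then (hwit n a h).choose else 0
  have hw : ∀ (n : ℕ) (a : A), a ∈ idealOf A x hx1 I n →
      w n a ∈ I ∧ w n a - x ^ n * (a : B) ∈ P A x n := by
    intro n a h
    simp only [w, dif_pos h]
    exact (hwit n a h).choose_spec
  set G : Finset B := (Finset.range (N + 1)).biUnion (fun n => (S n).image (w n)) with hG
  set J : Ideal B := Ideal.span (G : Set B) with hJ
  have hSmem : ∀ {n : ℕ} {a : A}, a ∈ S n → a ∈ idealOf A x hx1 I n := by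
    intro n a ha
    rw [← hS n]
    exact Submodule.subset_span ha
  have hJI : J ≤ I := by
    rw [hJ, Ideal.span_le]
    intro b hb
    simp only [hG, Finset.coe_biUnion, Finset.coe_image, Set.mem_iUnion] at hb
    obtain ⟨n, _, a, ha, rfl⟩ := hb
    exact (hw n a (hSmem ha)).1
  have hIJn : ∀ n : ℕ, idealOf A x hx1 I n ≤ idealOf A x hx1 J n := by
    intro n
    rcases Nat.lt_or_ge n (N + 1) with h | h
    · rw [← hS n, Submodule.span_le]
      intro a ha
      have haI := hSmem ha
      have hwn := hw n a haI
      have hwJ : w n a ∈ J := by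
        apply Ideal.subset_span
        simp only [hG, Finset.coe_biUnion, Finset.coe_image, Set.mem_iUnion]
        exact ⟨n, Finset.mem_range.mpr h, a, ha, rfl⟩
      exact ⟨w n a, hwJ, hwn.2⟩
    · have hstab : idealOf A x hx1 I n = idealOf A x hx1 I N :=
        (hN n (by omega)).symm
      rw [hstab, ← hS N, Submodule.span_le]
      intro a ha
      have haI := hSmem ha
      have hwn := hw N a haI
      have hwJ : w N a ∈ J := by
        apply Ideal.subset_span
        simp only [hG, Finset.coe_biUnion, Finset.coe_image, Set.mem_iUnion]
        exact ⟨N, by simp, a, ha, rfl⟩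
      have haJ : a ∈ idealOf A x hx1 J N := ⟨w N a, hwJ, hwn.2⟩
      exact idealOf_mono A x (by omega) haJ
  have main : ∀ n : ℕ, ∀ f ∈ I, f ∈ P A x n → f ∈ J := by
    intro n
    induction n with
    | zero =>
      intro f _ hf
      rw [P_zero, AddSubgroup.mem_bot] at hf
      subst hf
      exact J.zero_mem
    | succ n ih =>
      intro f hfI hf
      obtain ⟨a, ha⟩ := exists_leading A x hx1 hx2 n hf
      have haI : a ∈ idealOf A x hx1 I n := ⟨f, hfI, ha⟩
      obtain ⟨g, hgJ, hg⟩ := hIJn n haI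
      have hfg2 : f - g ∈ P A x n := by
        have : f - g = (f - x ^ n * (a : B)) - (g - x ^ n * (a : B)) := by abel
        rw [this]
        exact (P A x n).sub_mem ha hg
      have hfgI : f - g ∈ I := I.sub_mem hfI (hJI hgJ)
      have hfgJ : f - g ∈ J := ih (f - g) hfgI hfg2
      have : f = (f - g) + g := by abel
      rw [this]
      exact J.add_mem hfgJ hgJ
  refine ⟨G, le_antisymm ?_ ?_⟩
  · rw [← hJ]; exact hJI
  · intro f hf
    obtain ⟨n, hn⟩ := hunion f
    exact main n f hf hn
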